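/- arXiv:2007.09403 — 2 statements merged into one kernel-verified Lean document; each statement's English description precedes it below -/
import Mathlib

section
/- Let (A, +, ∘) be a strongly nilpotent left brace. Then for all x, y ∈ A, the element (x + x)*y − (x*y + x*y) lies in the additive subgroup of (A,+) generated by all iterated *-products (with any distribution of brackets) consisting of at least two copies of x followed by a single final factor y. -/
/-- A left brace: an abelian group `(A, +)` together with a group operation `∘`
satisfying `a ∘ (b + c) + a = a ∘ b + a ∘ c`. -/
structure LeftBrace (A : Type*) [AddCommGroup A] where
  circ : A → A → A
  one : A
  inv : A → A
  circ_assoc : ∀ a b c : A, circ (circ a b) c = circ a (circ b c)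
  one_circ : ∀ a : A, circ one a = a
  circ_one : ∀ a : A, circ a one = a
  inv_circ : ∀ a : A, circ (inv a) a = one
  left_dist : ∀ a b c : A, circ a (b + c) + a = circ a b + circ a c

/-- `a * b = a ∘ b - a - b`. -/
def LeftBrace.star {A : Type*} [AddCommGroup A] (B : LeftBrace A) (a b : A) : A :=
  B.circ a b - a - b

namespace LeftBrace
variable {A : Type*} [AddCommGroup A] (B : LeftBrace A)

lemma circ_zero (a : A) : B.circ a 0 = a := by
  have h := B.left_dist a 0 0
  rw [add_zero] at h
  exact (add_left_cancel h).symm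

lemma one_eq_zero : B.one = 0 := by
  have h1 : B.circ B.one 0 = B.one := B.circ_zero B.one
  rw [B.one_circ 0] at h1
  exact h1.symm

lemma zero_circ (a : A) : B.circ 0 a = a := by
  rw [← B.one_eq_zero, B.one_circ]

lemma circ_inv (a : A) : B.circ a (B.inv a) = 0 := by
  have h1 : B.circ (B.inv (B.inv a)) (B.circ (B.inv a) (B.circ a (B.inv a)))
      = B.circ a (B.inv a) := by
    rw [← B.circ_assoc, B.inv_circ, B.one_circ]
  rw [← B.circ_assoc (B.inv a) a (B.inv a), B.inv_circ a, B.one_circ,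
    B.inv_circ (B.inv a), B.one_eq_zero] at h1
  exact h1.symm

lemma inv_inv (a : A) : B.inv (B.inv a) = a := by
  have : B.circ (B.inv (B.inv a)) (B.circ (B.inv a) a) = a := by
    rw [← B.circ_assoc, B.inv_circ, B.one_circ]
  rw [B.inv_circ, B.circ_one] at this
  exact this

lemma circ_add (a b c : A) : B.circ a (b + c) = B.circ a b + B.circ a c - a := by
  rw [eq_sub_iff_add_eq]
  exact B.left_dist a b c

lemma circ_sub (a u v : A) : B.circ a (u - v) = B.circ a u - B.circ a v + a := by
  have h := B.circ_add a (u - v) v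
  rw [sub_add_cancel] at h
  rw [h]; abel

lemma star_add_right (a b c : A) : B.star a (b + c) = B.star a b + B.star a c := by
  unfold LeftBrace.star
  rw [B.circ_add]; abel

lemma star_zero_right (a : A) : B.star a 0 = 0 := by
  unfold LeftBrace.star
  rw [B.circ_zero]; abel

lemma zero_star (b : A) : B.star 0 b = 0 := by
  unfold LeftBrace.star
  rw [B.zero_circ]; abel

/-- `b ↦ a * b` as an additive homomorphism. -/
def starHom (a : A) : A →+ A := AddMonoidHom.mk' (B.star a) (B.star_add_right a)

@[simp] lemma starHom_apply (a b : A) : B.starHom a b = B.star a b := rfl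

lemma star_circ (a b c : A) :
    B.star (B.circ a b) c = B.star a (B.star b c) + B.star b c + B.star a c := by
  unfold LeftBrace.star
  rw [B.circ_assoc]
  rw [show B.circ b c - b - c = (B.circ b c - b) - c from rfl]
  rw [B.circ_sub a (B.circ b c - b) c, B.circ_sub a (B.circ b c) b]
  abel

lemma star_inv (a u : A) :
    B.star (B.inv a) u + B.star a (B.star (B.inv a) u) = -B.star a u := by
  have h := B.star_circ a (B.inv a) u
  rw [B.circ_inv, B.zero_star] at h
  rw [eq_neg_iff_add_eq_zero,
    show B.star (B.inv a) u + B.star a (B.star (B.inv a) u) + B.star a u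
      = B.star a (B.star (B.inv a) u) + B.star (B.inv a) u + B.star a u from by abel,
    ← h]

lemma star_add_left (a b c : A) :
    B.star (a + b) c = B.star a c + B.star (B.star (B.inv a) b + b) c
      + B.star a (B.star (B.star (B.inv a) b + b) c) := by
  have hg : B.circ a (B.star (B.inv a) b + b) = a + b := by
    rw [show B.star (B.inv a) b + b = B.circ (B.inv a) b - B.inv a from by
      unfold LeftBrace.star; abel]
    rw [B.circ_sub a (B.circ (B.inv a) b) (B.inv a)]
    rw [← B.circ_assoc, B.circ_inv, B.zero_circ]
    abel
  have h := B.star_circ a (B.star (B.inv a) b + b) c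
  rw [hg] at h
  rw [h]; abel

end LeftBrace


/-- The strong radical chain: `strongChain B m` is `A^[m+1]`; `A^[1] = A` and for
`i > 1`, `A^[i]` is the additive subgroup generated by all `a * b` with
`a ∈ A^[j]`, `b ∈ A^[i-j]`, `0 < j < i`. (Inside the binder `j ≤ m` we have
`min j m = j`, so the generating set below is exactly the intended one.) -/
def LeftBrace.strongChain {A : Type*} [AddCommGroup A] (B : LeftBrace A) : ℕ → AddSubgroup A
  | 0 => ⊤
  | (m+1) => AddSubgroup.closure
      {x : A | ∃ j ≤ m, ∃ u ∈ LeftBrace.strongChain B (min j m),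
        ∃ v ∈ LeftBrace.strongChain B (m - j), x = B.star u v}
termination_by n => n
decreasing_by
  · exact Nat.lt_succ_of_le (Nat.min_le_right j m)
  · exact Nat.lt_succ_of_le (Nat.sub_le m j)

/-- A brace is strongly nilpotent if `A^[n] = 0` for some `n`. -/
def LeftBrace.StronglyNilpotent {A : Type*} [AddCommGroup A] (B : LeftBrace A) : Prop :=
  ∃ n : ℕ, B.strongChain n = ⊥

namespace LeftBrace
variable {A : Type*} [AddCommGroup A] (B : LeftBrace A)

lemma strongChain_succ (m : ℕ) : B.strongChain (m+1) = AddSubgroup.closure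
    {x : A | ∃ j ≤ m, ∃ u ∈ B.strongChain (min j m),
      ∃ v ∈ B.strongChain (m - j), x = B.star u v} := by
  rw [strongChain]

lemma strongChain_zero : B.strongChain 0 = ⊤ := by rw [strongChain]

lemma strongChain_succ_le (m : ℕ) : B.strongChain (m+1) ≤ B.strongChain m := by
  induction m using Nat.strong_induction_on with
  | _ m ih =>
    match m with
    | 0 => simp [B.strongChain_zero]
    | Nat.succ m =>
      rw [B.strongChain_succ (m+1)]
      apply (AddSubgroup.closure_le _).2
      rintro w ⟨j, hj, u, hu, v, hv, rfl⟩
      rcases Nat.lt_or_ge j (m+1) with hjm | hjm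
      · -- j ≤ m
        have hj' : j ≤ m := Nat.lt_succ_iff.mp hjm
        have hv' : v ∈ B.strongChain (m - j) := by
          have : m + 1 - j = (m - j) + 1 := by omega
          rw [this] at hv
          exact ih (m - j) (by omega) hv
        rw [B.strongChain_succ m]
        apply AddSubgroup.subset_closure
        refine ⟨j, hj', u, ?_, v, hv', rfl⟩
        rw [min_eq_left hj] at hu
        rw [min_eq_left hj']
        exact hu
      · -- j = m+1
        have hjeq : j = m + 1 := le_antisymm hj hjm
        subst hjeq
        rw [min_eq_left (le_refl (m+1))] at hu
        have hu' : u ∈ B.strongChain m := ih m (by omega) hu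
        rw [B.strongChain_succ m]
        apply AddSubgroup.subset_closure
        refine ⟨m, le_refl m, u, ?_, v, ?_, rfl⟩
        · rw [min_self]; exact hu'
        · rw [Nat.sub_self]; rw [B.strongChain_zero]; trivial

lemma strongChain_le {k l : ℕ} (h : k ≤ l) : B.strongChain l ≤ B.strongChain k := by
  induction l with
  | zero => simp_all
  | succ l ih =>
    rcases Nat.lt_or_ge k (l+1) with h' | h'
    · exact le_trans (B.strongChain_succ_le l) (ih (by omega))
    · have : k = l + 1 := by omega
      subst this; exact le_refl _

lemma star_mem_chain {p q : ℕ} {u v : A} (hu : u ∈ B.strongChain p)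
    (hv : v ∈ B.strongChain q) : B.star u v ∈ B.strongChain (p + q + 1) := by
  rw [B.strongChain_succ (p + q)]
  apply AddSubgroup.subset_closure
  refine ⟨p, by omega, u, ?_, v, ?_, rfl⟩
  · rw [min_eq_left (by omega)]; exact hu
  · rw [show p + q - p = q from by omega]; exact hv

lemma star_mem_chain_succ {q : ℕ} (a : A) {v : A} (hv : v ∈ B.strongChain q) :
    B.star a v ∈ B.strongChain (q + 1) := by
  have := B.star_mem_chain (p := 0) (q := q) (u := a) (v := v)
      (by rw [B.strongChain_zero]; trivial) hv
  simpa using this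

end LeftBrace


/-- `StarWord B x y w n t` says `w` is an iterated `*`-product whose leaves are
`n` copies of `x` and, if `t = true`, a single copy of `y` as the rightmost
(final) leaf. -/
inductive StarWord {A : Type*} [AddCommGroup A] (B : LeftBrace A) (x y : A) :
    A → ℕ → Bool → Prop
  | base_x : StarWord B x y x 1 false
  | base_y : StarWord B x y y 0 true
  | node {u v : A} {n m : ℕ} {t : Bool} :
      StarWord B x y u n false → StarWord B x y v m t →
      StarWord B x y (B.star u v) (n + m) t

namespace LeftBrace
variable {A : Type*} [AddCommGroup A] (B : LeftBrace A) (x y : A)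

lemma star_inv_self (a : A) : B.star (B.inv a) a = -(B.inv a) - a := by
  unfold LeftBrace.star
  rw [B.inv_circ, B.one_eq_zero]
  abel

lemma neg_eq_inv_add (a : A) : -a = B.inv a + B.star (B.inv a) a := by
  rw [B.star_inv_self]; abel

lemma starWord_count_pos {w : A} {n : ℕ} (h : StarWord B x y w n false) : 1 ≤ n := by
  generalize ht : false = t at h
  induction h with
  | base_x => omega
  | base_y => exact absurd ht (by simp)
  | node h1 h2 ih1 ih2 => have := ih1 rfl; omega

lemma starWord_mem_chain {w : A} {n : ℕ} {t : Bool} (h : StarWord B x y w n t) :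
    w ∈ B.strongChain (if t then n else n - 1) := by
  induction h with
  | base_x => simp [B.strongChain_zero]
  | base_y => simp [B.strongChain_zero]
  | @node u v nu m t h1 h2 ih1 ih2 =>
    have hnu : 1 ≤ nu := starWord_count_pos B x y h1
    rw [if_neg (by simp)] at ih1
    have hmem := B.star_mem_chain ih1 ih2
    cases t with
    | false =>
      have hm : 1 ≤ m := starWord_count_pos B x y h2
      rw [if_neg (by simp)] at hmem ⊢
      rwa [show nu - 1 + (m - 1) + 1 = nu + m - 1 from by omega] at hmem
    | true =>
      rw [if_pos rfl] at hmem ⊢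
      rwa [show nu - 1 + m + 1 = nu + m from by omega] at hmem

/-- Additive subgroup generated by pure-`x` words with at least `k` letters. -/
def Wgrp (k : ℕ) : AddSubgroup A :=
  AddSubgroup.closure {w : A | ∃ n : ℕ, StarWord B x y w n false ∧ k ≤ n}

/-- Additive subgroup generated by `y`-ended words with at least `k` copies of `x`. -/
def Sgrp (k : ℕ) : AddSubgroup A :=
  AddSubgroup.closure {w : A | ∃ n : ℕ, StarWord B x y w n true ∧ k ≤ n}

lemma Wgrp_le {k l : ℕ} (h : k ≤ l) : Wgrp B x y l ≤ Wgrp B x y k :=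
  AddSubgroup.closure_mono (fun w ⟨n, hw, hn⟩ => ⟨n, hw, by omega⟩)

lemma Sgrp_le {k l : ℕ} (h : k ≤ l) : Sgrp B x y l ≤ Sgrp B x y k :=
  AddSubgroup.closure_mono (fun w ⟨n, hw, hn⟩ => ⟨n, hw, by omega⟩)

lemma Wgrp_le_chain (k : ℕ) : Wgrp B x y k ≤ B.strongChain (k - 1) := by
  apply (AddSubgroup.closure_le _).2
  rintro w ⟨n, hw, hn⟩
  have hc := starWord_mem_chain B x y hw
  rw [if_neg (by simp)] at hc
  exact B.strongChain_le (by omega) hc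

lemma word_star_W {a : A} {m : ℕ} (ha : StarWord B x y a m false) {j : ℕ} {v : A}
    (hv : v ∈ Wgrp B x y j) : B.star a v ∈ Wgrp B x y (m + j) := by
  have hle : Wgrp B x y j ≤ (Wgrp B x y (m + j)).comap (B.starHom a) := by
    apply (AddSubgroup.closure_le _).2
    rintro w ⟨nw, hw, hkw⟩
    exact AddSubgroup.subset_closure ⟨m + nw, StarWord.node ha hw, by omega⟩
  exact hle hv

lemma word_star_S {a : A} {m : ℕ} (ha : StarWord B x y a m false) {j : ℕ} {v : A}
    (hv : v ∈ Sgrp B x y j) : B.star a v ∈ Sgrp B x y (m + j) := by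
  have hle : Sgrp B x y j ≤ (Sgrp B x y (m + j)).comap (B.starHom a) := by
    apply (AddSubgroup.closure_le _).2
    rintro w ⟨nw, hw, hkw⟩
    exact AddSubgroup.subset_closure ⟨m + nw, StarWord.node ha hw, by omega⟩
  exact hle hv

lemma fix_lemma {n : ℕ} (hn : B.strongChain n = ⊥) (T : AddSubgroup A) (a : A)
    (hT : ∀ t ∈ T, B.star a t ∈ T) {v : A} (hv : v + B.star a v ∈ T) : v ∈ T := by
  suffices H : ∀ m k (v : A), n ≤ k + m → v ∈ B.strongChain k → v + B.star a v ∈ T → v ∈ T by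
    exact H n 0 v (by omega) (by rw [B.strongChain_zero]; trivial) hv
  intro m
  induction m with
  | zero =>
    intro k v hk hvk _
    have h0 := B.strongChain_le (show n ≤ k by omega) hvk
    rw [hn, AddSubgroup.mem_bot] at h0
    rw [h0]; exact zero_mem T
  | succ m ih =>
    intro k v hk hvk hvT
    have h1 : B.star a v ∈ B.strongChain (k + 1) := B.star_mem_chain_succ a hvk
    have h2 : B.star a v + B.star a (B.star a v) ∈ T := by
      have := hT _ hvT
      rwa [B.star_add_right] at this
    have h3 : B.star a v ∈ T := ih (k + 1) _ (by omega) h1 h2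
    have h4 : v = (v + B.star a v) - B.star a v := by abel
    rw [h4]; exact sub_mem hvT h3

end LeftBrace

namespace LeftBrace
variable {A : Type*} [AddCommGroup A] (B : LeftBrace A) (x y : A)

lemma mul_lemma {n : ℕ} (hn : B.strongChain n = ⊥) :
    ∀ d k, n + 1 ≤ k + d → 1 ≤ k → ∀ u ∈ Wgrp B x y k, ∀ j,
      (∀ v ∈ Wgrp B x y j, B.star u v ∈ Wgrp B x y (k + j)) ∧
      (∀ v ∈ Sgrp B x y j, B.star u v ∈ Sgrp B x y (k + j)) := by
  intro d
  induction d with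
  | zero =>
    intro k hkd hk u hu j
    have h0 : u ∈ B.strongChain (k - 1) := Wgrp_le_chain B x y k hu
    have h1 := B.strongChain_le (show n ≤ k - 1 by omega) h0
    rw [hn, AddSubgroup.mem_bot] at h1
    subst h1
    exact ⟨fun v _ => by rw [B.zero_star]; exact zero_mem _,
           fun v _ => by rw [B.zero_star]; exact zero_mem _⟩
  | succ d ih =>
    intro k hkd hk u hu
    refine AddSubgroup.closure_induction
      (p := fun u _ => ∀ j,
        (∀ v ∈ Wgrp B x y j, B.star u v ∈ Wgrp B x y (k + j)) ∧
        (∀ v ∈ Sgrp B x y j, B.star u v ∈ Sgrp B x y (k + j)))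
      ?_ ?_ ?_ ?_ hu
    · -- generators
      rintro w ⟨nw, hw, hkw⟩ j
      exact ⟨fun v hv => Wgrp_le B x y (show k + j ≤ nw + j by omega) (word_star_W B x y hw hv),
             fun v hv => Sgrp_le B x y (show k + j ≤ nw + j by omega) (word_star_S B x y hw hv)⟩
    · -- zero
      intro j
      exact ⟨fun v _ => by rw [B.zero_star]; exact zero_mem _,
             fun v _ => by rw [B.zero_star]; exact zero_mem _⟩
    · -- addition
      intro u₁ u₂ h₁ h₂ Q₁ Q₂ j
      have h₁' : u₁ ∈ Wgrp B x y k := h₁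
      have h₂' : u₂ ∈ Wgrp B x y k := h₂
      -- h := (inv u₁) * u₂ ∈ W (k+1)
      have hh : B.star (B.inv u₁) u₂ ∈ Wgrp B x y (k + 1) := by
        refine Wgrp_le B x y (show k + 1 ≤ k + k by omega) ?_
        refine B.fix_lemma hn (Wgrp B x y (k + k)) u₁
          (fun t ht => Wgrp_le B x y (show k + k ≤ k + (k + k) by omega) ((Q₁ (k + k)).1 t ht)) ?_
        rw [B.star_inv]
        exact neg_mem ((Q₁ k).1 u₂ h₂')
      -- g₂ := (inv u₂) * h + h ∈ W (k+1)
      have hg₂ : B.star (B.inv u₂) (B.star (B.inv u₁) u₂) + B.star (B.inv u₁) u₂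
          ∈ Wgrp B x y (k + 1) := by
        refine add_mem ?_ hh
        refine Wgrp_le B x y (show k + 1 ≤ k + (k + 1) by omega) ?_
        refine B.fix_lemma hn (Wgrp B x y (k + (k + 1))) u₂
          (fun t ht => Wgrp_le B x y (show k + (k + 1) ≤ k + (k + (k + 1)) by omega)
            ((Q₂ (k + (k + 1))).1 t ht)) ?_
        rw [B.star_inv]
        exact neg_mem ((Q₂ (k + 1)).1 _ hh)
      have hihg₂ := ih (k + 1) (by omega) (by omega) _ hg₂
      constructor
      · intro v hv
        have hgv : B.star (B.star (B.inv u₁) u₂ + u₂) v ∈ Wgrp B x y (k + j) := by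
          rw [add_comm (B.star (B.inv u₁) u₂) u₂, B.star_add_left u₂ (B.star (B.inv u₁) u₂) v]
          refine add_mem (add_mem ((Q₂ j).1 v hv) ?_) ?_
          · exact Wgrp_le B x y (by omega) ((hihg₂ j).1 v hv)
          · exact Wgrp_le B x y (by omega) ((Q₂ (k + 1 + j)).1 _ ((hihg₂ j).1 v hv))
        rw [B.star_add_left u₁ u₂ v]
        refine add_mem (add_mem ((Q₁ j).1 v hv) hgv) ?_
        exact Wgrp_le B x y (by omega) ((Q₁ (k + j)).1 _ hgv)
      · intro v hv
        have hgv : B.star (B.star (B.inv u₁) u₂ + u₂) v ∈ Sgrp B x y (k + j) := by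
          rw [add_comm (B.star (B.inv u₁) u₂) u₂, B.star_add_left u₂ (B.star (B.inv u₁) u₂) v]
          refine add_mem (add_mem ((Q₂ j).2 v hv) ?_) ?_
          · exact Sgrp_le B x y (by omega) ((hihg₂ j).2 v hv)
          · exact Sgrp_le B x y (by omega) ((Q₂ (k + 1 + j)).2 _ ((hihg₂ j).2 v hv))
        rw [B.star_add_left u₁ u₂ v]
        refine add_mem (add_mem ((Q₁ j).2 v hv) hgv) ?_
        exact Sgrp_le B x y (by omega) ((Q₁ (k + j)).2 _ hgv)
    · -- negation
      intro u hu' Q j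
      have hu'' : u ∈ Wgrp B x y k := hu'
      -- h := (inv u) * u ∈ W (k+1)
      have hh : B.star (B.inv u) u ∈ Wgrp B x y (k + 1) := by
        refine Wgrp_le B x y (show k + 1 ≤ k + k by omega) ?_
        refine B.fix_lemma hn (Wgrp B x y (k + k)) u
          (fun t ht => Wgrp_le B x y (show k + k ≤ k + (k + k) by omega) ((Q (k + k)).1 t ht)) ?_
        rw [B.star_inv]
        exact neg_mem ((Q k).1 u hu'')
      -- g := u * h + h ∈ W (k+1)
      have hg : B.star u (B.star (B.inv u) u) + B.star (B.inv u) u ∈ Wgrp B x y (k + 1) := by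
        refine add_mem ?_ hh
        exact Wgrp_le B x y (show k + 1 ≤ k + (k + 1) by omega) ((Q (k + 1)).1 _ hh)
      have hihg := ih (k + 1) (by omega) (by omega) _ hg
      constructor
      · intro v hv
        have hu'v : B.star (B.inv u) v ∈ Wgrp B x y (k + j) := by
          refine B.fix_lemma hn (Wgrp B x y (k + j)) u
            (fun t ht => Wgrp_le B x y (show k + j ≤ k + (k + j) by omega)
              ((Q (k + j)).1 t ht)) ?_
          rw [B.star_inv]
          exact neg_mem ((Q j).1 v hv)
        rw [B.neg_eq_inv_add u, B.star_add_left (B.inv u) (B.star (B.inv u) u) v, B.inv_inv]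
        refine add_mem (add_mem hu'v (Wgrp_le B x y (by omega) ((hihg j).1 v hv))) ?_
        refine B.fix_lemma hn (Wgrp B x y (k + j)) u
          (fun t ht => Wgrp_le B x y (show k + j ≤ k + (k + j) by omega)
            ((Q (k + j)).1 t ht)) ?_
        rw [B.star_inv]
        exact neg_mem (Wgrp_le B x y (by omega) ((Q (k + 1 + j)).1 _ ((hihg j).1 v hv)))
      · intro v hv
        have hu'v : B.star (B.inv u) v ∈ Sgrp B x y (k + j) := by
          refine B.fix_lemma hn (Sgrp B x y (k + j)) u
            (fun t ht => Sgrp_le B x y (show k + j ≤ k + (k + j) by omega)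
              ((Q (k + j)).2 t ht)) ?_
          rw [B.star_inv]
          exact neg_mem ((Q j).2 v hv)
        rw [B.neg_eq_inv_add u, B.star_add_left (B.inv u) (B.star (B.inv u) u) v, B.inv_inv]
        refine add_mem (add_mem hu'v (Sgrp_le B x y (by omega) ((hihg j).2 v hv))) ?_
        refine B.fix_lemma hn (Sgrp B x y (k + j)) u
          (fun t ht => Sgrp_le B x y (show k + j ≤ k + (k + j) by omega)
            ((Q (k + j)).2 t ht)) ?_
        rw [B.star_inv]
        exact neg_mem (Sgrp_le B x y (by omega) ((Q (k + 1 + j)).2 _ ((hihg j).2 v hv)))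

end LeftBrace


set_option maxHeartbeats 800000 in
theorem statement2 {A : Type*} [AddCommGroup A] (B : LeftBrace A)
    (hSN : B.StronglyNilpotent) (x y : A) :
    B.star (x + x) y - (B.star x y + B.star x y)
      ∈ AddSubgroup.closure {w : A | ∃ n : ℕ, StarWord B x y w n true ∧ 2 ≤ n} := by
  obtain ⟨n, hn⟩ := hSN
  have hx : StarWord B x y x 1 false := StarWord.base_x
  have hy0 : y ∈ LeftBrace.Sgrp B x y 0 :=
    AddSubgroup.subset_closure ⟨0, StarWord.base_y, le_refl 0⟩
  have hC0 : (B.star (B.inv x) x) ∈ LeftBrace.Wgrp B x y 2 := by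
    refine B.fix_lemma hn (LeftBrace.Wgrp B x y 2) x
      (fun t ht => LeftBrace.Wgrp_le B x y (show 2 ≤ 1 + 2 by omega)
        (LeftBrace.word_star_W B x y hx ht)) ?_
    rw [B.star_inv]
    exact neg_mem (AddSubgroup.subset_closure
      ⟨2, StarWord.node StarWord.base_x StarWord.base_x, le_refl 2⟩)
  have he' : B.star (B.inv x) (B.star (B.inv x) x) ∈ LeftBrace.Wgrp B x y 3 := by
    refine B.fix_lemma hn (LeftBrace.Wgrp B x y 3) x
      (fun t ht => LeftBrace.Wgrp_le B x y (show 3 ≤ 1 + 3 by omega)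
        (LeftBrace.word_star_W B x y hx ht)) ?_
    rw [B.star_inv]
    exact neg_mem (LeftBrace.Wgrp_le B x y (show 3 ≤ 1 + 2 by omega)
      (LeftBrace.word_star_W B x y hx hC0))
  have he : B.star (B.inv x) (B.star (B.inv x) x) + (B.star (B.inv x) x) ∈ LeftBrace.Wgrp B x y 2 :=
    add_mem (LeftBrace.Wgrp_le B x y (by omega) he') hC0
  have hA : B.star (B.star (B.inv x) (B.star (B.inv x) x) + (B.star (B.inv x) x)) y ∈ LeftBrace.Sgrp B x y 2 :=
    LeftBrace.Sgrp_le B x y (show 2 ≤ 2 + 0 by omega)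
      ((LeftBrace.mul_lemma B x y hn n 2 (by omega) (by omega) _ he 0).2 y hy0)
  have hBt : B.star x (B.star (B.star (B.inv x) (B.star (B.inv x) x) + (B.star (B.inv x) x)) y) ∈ LeftBrace.Sgrp B x y 2 :=
    LeftBrace.Sgrp_le B x y (by omega) (LeftBrace.word_star_S B x y hx hA)
  have hD : B.star ((B.star (B.inv x) x) + x) y = B.star x y + (B.star (B.star (B.inv x) (B.star (B.inv x) x) + (B.star (B.inv x) x)) y) + (B.star x (B.star (B.star (B.inv x) (B.star (B.inv x) x) + (B.star (B.inv x) x)) y)) := by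
    rw [add_comm (B.star (B.inv x) x) x, B.star_add_left x (B.star (B.inv x) x) y]
  have hDsub : B.star ((B.star (B.inv x) x) + x) y - B.star x y ∈ LeftBrace.Sgrp B x y 2 := by
    rw [show B.star ((B.star (B.inv x) x) + x) y - B.star x y = (B.star (B.star (B.inv x) (B.star (B.inv x) x) + (B.star (B.inv x) x)) y) + (B.star x (B.star (B.star (B.inv x) (B.star (B.inv x) x) + (B.star (B.inv x) x)) y)) from by rw [hD]; abel]
    exact add_mem hA hBt
  have hxxy : B.star x (B.star x y) ∈ LeftBrace.Sgrp B x y 2 :=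
    AddSubgroup.subset_closure
      ⟨2, StarWord.node StarWord.base_x (StarWord.node StarWord.base_x StarWord.base_y),
        by omega⟩
  have hm3 : B.star x (B.star ((B.star (B.inv x) x) + x) y) ∈ LeftBrace.Sgrp B x y 2 := by
    rw [show B.star ((B.star (B.inv x) x) + x) y = B.star x y + (B.star (B.star (B.inv x) (B.star (B.inv x) x) + (B.star (B.inv x) x)) y) + (B.star x (B.star (B.star (B.inv x) (B.star (B.inv x) x) + (B.star (B.inv x) x)) y)) from hD,
      B.star_add_right x (B.star x y + (B.star (B.star (B.inv x) (B.star (B.inv x) x) + (B.star (B.inv x) x)) y)) (B.star x (B.star (B.star (B.inv x) (B.star (B.inv x) x) + (B.star (B.inv x) x)) y)),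
      B.star_add_right x (B.star x y) (B.star (B.star (B.inv x) (B.star (B.inv x) x) + (B.star (B.inv x) x)) y)]
    refine add_mem (add_mem hxxy ?_) ?_
    · exact LeftBrace.Sgrp_le B x y (by omega) (LeftBrace.word_star_S B x y hx hA)
    · exact LeftBrace.Sgrp_le B x y (by omega) (LeftBrace.word_star_S B x y hx hBt)
  have hmain : B.star (x + x) y - (B.star x y + B.star x y)
      = (B.star ((B.star (B.inv x) x) + x) y - B.star x y) + B.star x (B.star ((B.star (B.inv x) x) + x) y) := by
    rw [B.star_add_left x x y]
    abel
  rw [hmain]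
  exact add_mem hDsub hm3
end

section
/- Let (A, +, ·) be a nilpotent pre-Lie algebra over the field ℚ, let Ω: A → A be the inverse of the map W, define a∘b = a + e^{L_{Ω(a)}}(b) and a*b = a∘b − a − b. Then for all a, b ∈ A and every ℚ-linear functional φ: A → ℚ, the real sequence n ↦ φ( 2^n · ( ((1/2^n)·a) * b ) ) converges to φ(a·b) as n → ∞. -/
open Filter Topology

/-- A pre-Lie algebra over a field `F`: an `F`-vector space with a bilinear
product satisfying `(x·y)·z − x·(y·z) = (y·x)·z − y·(x·z)`. -/
structure PreLieAlg (F : Type*) (A : Type*) [Field F] [AddCommGroup A] [Module F A] where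
  mul : A → A → A
  mul_add : ∀ a b c : A, mul a (b + c) = mul a b + mul a c
  add_mul : ∀ a b c : A, mul (a + b) c = mul a c + mul b c
  smul_mul : ∀ (e : F) (a b : A), mul (e • a) b = e • mul a b
  mul_smul : ∀ (e : F) (a b : A), mul a (e • b) = e • mul a b
  pre_lie : ∀ a b c : A,
    mul (mul a b) c - mul a (mul b c) = mul (mul b a) c - mul b (mul a c)

/-- `P.IsProd x n` : `x` is a product of `n` elements of `A`, with any
distribution of brackets. -/
inductive PreLieAlg.IsProd {F A : Type*} [Field F] [AddCommGroup A] [Module F A]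
    (P : PreLieAlg F A) : A → ℕ → Prop
  | single (a : A) : PreLieAlg.IsProd P a 1
  | node {u v : A} {n m : ℕ} : PreLieAlg.IsProd P u n → PreLieAlg.IsProd P v m →
      PreLieAlg.IsProd P (P.mul u v) (n + m)

/-- `A` is nilpotent of index `n` (`0 < n`): every product of `n` elements
(with any distribution of brackets) is zero. -/
def PreLieAlg.IsNilpotentOf {F A : Type*} [Field F] [AddCommGroup A] [Module F A]
    (P : PreLieAlg F A) (n : ℕ) : Prop :=
  0 < n ∧ ∀ x : A, P.IsProd x n → x = 0

/-- `e^{L_x}(b) = Σ_{k ≥ 0} (1/k!) • L_x^k(b)`; under nilpotency of index `n`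
all terms with `k ≥ n - 1` vanish, so the series equals this truncated sum. -/
def PreLieAlg.expL {F A : Type*} [Field F] [AddCommGroup A] [Module F A]
    (P : PreLieAlg F A) (n : ℕ) (x b : A) : A :=
  ∑ k ∈ Finset.range n, ((Nat.factorial k : F))⁻¹ • (P.mul x)^[k] b

/-- `W(a) = Σ_{k ≥ 1} (1/k!) • L_a^{k-1}(a)`; under nilpotency of index `n`
all terms with `k ≥ n` vanish, so the series equals this truncated sum. -/
def PreLieAlg.W {F A : Type*} [Field F] [AddCommGroup A] [Module F A]
    (P : PreLieAlg F A) (n : ℕ) (a : A) : A :=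
  ∑ k ∈ Finset.range n, ((Nat.factorial (k + 1) : F))⁻¹ • (P.mul a)^[k] a

/-- The group-of-flows multiplication `a ∘ b = a + e^{L_{Ω(a)}}(b)`. -/
def PreLieAlg.flow {F A : Type*} [Field F] [AddCommGroup A] [Module F A]
    (P : PreLieAlg F A) (n : ℕ) (Ω : A → A) (a b : A) : A :=
  a + P.expL n (Ω a) b

/-- `a * b = a ∘ b - a - b` for the group-of-flows multiplication. -/
def PreLieAlg.flowStar {F A : Type*} [Field F] [AddCommGroup A] [Module F A]
    (P : PreLieAlg F A) (n : ℕ) (Ω : A → A) (a b : A) : A :=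
  P.flow n Ω a b - a - b
section Aux

namespace PreLieAlg

variable {A : Type*} [AddCommGroup A] [Module ℚ A] (P : PreLieAlg ℚ A)

theorem mul_zero' (x : A) : P.mul x 0 = 0 := by
  have h := P.mul_add x 0 0
  simp only [add_zero] at h
  exact add_left_cancel (h.symm.trans (add_zero _).symm)

theorem zero_mul' (x : A) : P.mul 0 x = 0 := by
  have h := P.add_mul 0 0 x
  simp only [add_zero] at h
  exact add_left_cancel (h.symm.trans (add_zero _).symm)

theorem mul_sub' (x y z : A) : P.mul x (y - z) = P.mul x y - P.mul x z := by
  have h := P.mul_add x (y - z) z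
  rw [sub_add_cancel] at h
  exact eq_sub_of_add_eq h.symm

theorem sub_mul' (x y z : A) : P.mul (x - y) z = P.mul x z - P.mul y z := by
  have h := P.add_mul (x - y) y z
  rw [sub_add_cancel] at h
  exact eq_sub_of_add_eq h.symm

theorem mul_sum_left {ι : Type*} (s : Finset ι) (f : ι → A) (y : A) :
    P.mul (∑ i ∈ s, f i) y = ∑ i ∈ s, P.mul (f i) y := by
  classical
  induction s using Finset.induction with
  | empty => simp [P.zero_mul']
  | insert _ _ h ih => rw [Finset.sum_insert h, Finset.sum_insert h, P.add_mul, ih]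

theorem mul_sum_right {ι : Type*} (s : Finset ι) (f : ι → A) (y : A) :
    P.mul y (∑ i ∈ s, f i) = ∑ i ∈ s, P.mul y (f i) := by
  classical
  induction s using Finset.induction with
  | empty => simp [P.mul_zero']
  | insert _ _ h ih => rw [Finset.sum_insert h, Finset.sum_insert h, P.mul_add, ih]

theorem isProd_pos {x : A} {m : ℕ} (h : P.IsProd x m) : 1 ≤ m := by
  induction h with
  | single => exact le_refl 1
  | node hu hv ihu ihv => omega

theorem isProd_collapse {x : A} {m : ℕ} (h : P.IsProd x m) :
    ∀ k, 1 ≤ k → k ≤ m → P.IsProd x k := by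
  induction h with
  | single a => intro k h1 h2
                have : k = 1 := le_antisymm h2 h1
                subst this; exact .single a
  | @node u v nu mv hu hv ihu ihv =>
      intro k h1 h2
      rcases Nat.lt_or_ge k 2 with hk | hk
      · have : k = 1 := by omega
        subst this; exact .single _
      · have hnu : 1 ≤ nu := P.isProd_pos hu
        have hmv : 1 ≤ mv := P.isProd_pos hv
        set k₁ := min nu (k - 1) with hk₁
        set k₂ := k - k₁ with hk₂
        have e : k = k₁ + k₂ := by omega
        have h₁ : P.IsProd u k₁ := ihu k₁ (by omega) (by omega)
        have h₂ : P.IsProd v k₂ := ihv k₂ (by omega) (by omega)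
        rw [e]; exact .node h₁ h₂

/-- span of products of exactly `k` elements -/
def Iid (k : ℕ) : Submodule ℚ A := Submodule.span ℚ {x : A | P.IsProd x k}

theorem mem_Iid_one (x : A) : x ∈ P.Iid 1 :=
  Submodule.subset_span (PreLieAlg.IsProd.single x)

theorem Iid_mul_mem {p q : ℕ} {x y : A} (hx : x ∈ P.Iid p) (hy : y ∈ P.Iid q) :
    P.mul x y ∈ P.Iid (p + q) := by
  induction hx using Submodule.span_induction with
  | mem x hx =>
      induction hy using Submodule.span_induction with
      | mem y hy => exact Submodule.subset_span (PreLieAlg.IsProd.node hx hy)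
      | zero => rw [P.mul_zero']; exact Submodule.zero_mem _
      | add y z _ _ hy hz => rw [P.mul_add]; exact Submodule.add_mem _ hy hz
      | smul c y _ hy => rw [P.mul_smul]; exact Submodule.smul_mem _ _ hy
  | zero => rw [P.zero_mul']; exact Submodule.zero_mem _
  | add x z _ _ hx hz => rw [P.add_mul]; exact Submodule.add_mem _ hx hz
  | smul c x _ hx => rw [P.smul_mul]; exact Submodule.smul_mem _ _ hx

theorem Iid_le {k l : ℕ} (h1 : 1 ≤ k) (hkl : k ≤ l) : P.Iid l ≤ P.Iid k := by
  apply Submodule.span_le.mpr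
  intro x hx
  exact Submodule.subset_span (P.isProd_collapse hx k h1 hkl)

theorem Iid_eq_zero {n : ℕ} (hn : P.IsNilpotentOf n) {x : A} {l : ℕ} (hl : n ≤ l)
    (hx : x ∈ P.Iid l) : x = 0 := by
  have hx' : x ∈ P.Iid n := P.Iid_le hn.1 hl hx
  have : P.Iid n ≤ ⊥ := Submodule.span_le.mpr (fun y hy => by
    simp only [SetLike.mem_coe, Submodule.mem_bot]
    exact hn.2 y hy)
  simpa using this hx'

end PreLieAlg
end Aux
section Aux2
namespace PreLieAlg

variable {A : Type*} [AddCommGroup A] [Module ℚ A] (P : PreLieAlg ℚ A)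

/-- `R(z) = W(z) - z`, the higher-order part of `W`. -/
def Rfun (m : ℕ) (z : A) : A :=
  ∑ k ∈ Finset.range m, ((Nat.factorial (k + 2) : ℚ))⁻¹ • (P.mul z)^[k + 1] z

theorem W_eq (m : ℕ) (z : A) : P.W (m + 1) z = z + P.Rfun m z := by
  unfold PreLieAlg.W PreLieAlg.Rfun
  rw [Finset.sum_range_succ']
  simp only [zero_add, Function.iterate_zero_apply, Nat.factorial_one, Nat.cast_one, inv_one, one_smul]
  exact add_comm (∑ k ∈ Finset.range m, ((Nat.factorial (k + 1 + 1) : ℚ))⁻¹ • (P.mul z)^[k + 1] z) z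

theorem iter_diff {j : ℕ} {z z' : A} (hd : z - z' ∈ P.Iid j) (hj : 1 ≤ j) :
    ∀ k, (P.mul z)^[k + 1] z - (P.mul z')^[k + 1] z' ∈ P.Iid (j + 1) := by
  intro k
  induction k with
  | zero =>
      show P.mul z z - P.mul z' z' ∈ _
      have e : P.mul z z - P.mul z' z' = P.mul (z - z') z + P.mul z' (z - z') := by
        rw [P.sub_mul', P.mul_sub']; abel
      rw [e]
      refine Submodule.add_mem _ (P.Iid_mul_mem hd (P.mem_Iid_one z)) ?_
      have := P.Iid_mul_mem (P.mem_Iid_one z') hd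
      rwa [add_comm] at this
  | succ k ih =>
      have e : (P.mul z)^[k + 1 + 1] z - (P.mul z')^[k + 1 + 1] z'
          = P.mul (z - z') ((P.mul z)^[k + 1] z)
            + P.mul z' ((P.mul z)^[k + 1] z - (P.mul z')^[k + 1] z') := by
        rw [Function.iterate_succ_apply' (P.mul z) (k + 1) z,
          Function.iterate_succ_apply' (P.mul z') (k + 1) z', P.sub_mul', P.mul_sub']
        abel
      rw [e]
      refine Submodule.add_mem _ (P.Iid_mul_mem hd (P.mem_Iid_one _)) ?_
      have h2 := P.Iid_mul_mem (P.mem_Iid_one z') ih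
      exact P.Iid_le (by omega) (by omega) h2

theorem Rfun_diff {j m : ℕ} {z z' : A} (hd : z - z' ∈ P.Iid j) (hj : 1 ≤ j) :
    P.Rfun m z - P.Rfun m z' ∈ P.Iid (j + 1) := by
  unfold PreLieAlg.Rfun
  rw [← Finset.sum_sub_distrib]
  refine Submodule.sum_mem _ (fun k _ => ?_)
  rw [← smul_sub]
  exact Submodule.smul_mem _ _ (P.iter_diff hd hj k)

/-- Newton-type iteration whose limit is `Ω (t • a)`. -/
def Yseq (m : ℕ) (a : A) : ℕ → ℚ → A
  | 0, _ => 0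
  | i + 1, t => t • a - P.Rfun m (Yseq m a i t)

theorem Yseq_zero (m : ℕ) (a : A) (t : ℚ) : P.Yseq m a 0 t = 0 := rfl

theorem Yseq_succ (m : ℕ) (a : A) (i : ℕ) (t : ℚ) :
    P.Yseq m a (i + 1) t = t • a - P.Rfun m (P.Yseq m a i t) := rfl

theorem Yseq_diff (m : ℕ) (a : A) (t : ℚ) :
    ∀ i, P.Yseq m a (i + 1) t - P.Yseq m a i t ∈ P.Iid (i + 1) := by
  intro i
  induction i with
  | zero => exact P.mem_Iid_one _
  | succ i ih =>
      have key := Submodule.neg_mem _ (P.Rfun_diff (m := m) ih (by omega))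
      have e : P.Yseq m a (i + 1 + 1) t - P.Yseq m a (i + 1) t
          = -(P.Rfun m (P.Yseq m a (i + 1) t) - P.Rfun m (P.Yseq m a i t)) := by
        rw [P.Yseq_succ m a (i + 1) t, P.Yseq_succ m a i t]; abel
      rw [e]
      exact key

theorem W_Yseq {m : ℕ} (hn : P.IsNilpotentOf (m + 2)) (a : A) (t : ℚ) :
    P.W (m + 2) (P.Yseq (m + 1) a (m + 3) t) = t • a := by
  have hstab' : P.Yseq (m + 1) a (m + 3 + 1) t = P.Yseq (m + 1) a (m + 3) t :=
    sub_eq_zero.mp (P.Iid_eq_zero hn (by omega) (P.Yseq_diff (m + 1) a t (m + 3)))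
  have e2 : P.Yseq (m + 1) a (m + 3) t
      = t • a - P.Rfun (m + 1) (P.Yseq (m + 1) a (m + 3) t) := by
    conv_lhs => rw [← hstab']
    exact P.Yseq_succ (m + 1) a (m + 3) t
  have e := P.W_eq (m + 1) (P.Yseq (m + 1) a (m + 3) t)
  set Y := P.Yseq (m + 1) a (m + 3) t with hY
  set R0 := P.Rfun (m + 1) Y with hR0
  rw [show m + 2 = (m + 1) + 1 from rfl, e, e2]
  abel

end PreLieAlg
end Aux2
section Aux3
namespace PreLieAlg

variable {A : Type*} [AddCommGroup A] [Module ℚ A] (P : PreLieAlg ℚ A)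

theorem sum_range_ite {M : Type*} [AddCommMonoid M] {N K : ℕ} (h : N ≤ K) (f : ℕ → M) :
    ∑ j ∈ Finset.range K, (if j < N then f j else 0) = ∑ j ∈ Finset.range N, f j := by
  rw [← Finset.sum_subset (Finset.range_subset_range.mpr h)
      (fun j _ hj => if_neg (fun hlt => hj (Finset.mem_range.mpr hlt)))]
  exact Finset.sum_congr rfl (fun j hj => if_pos (Finset.mem_range.mp hj))

/-- `F : ℚ → A` is a polynomial curve all of whose coefficients of degree `< d` vanish. -/
def PCd (d : ℕ) (F : ℚ → A) : Prop :=
  ∃ (N : ℕ) (c : ℕ → A), ∀ t : ℚ, F t = ∑ j ∈ Finset.range N, t ^ (j + d) • c j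

theorem pcd_zero (d : ℕ) : PCd (A := A) d (fun _ => 0) :=
  ⟨0, fun _ => 0, fun t => by simp⟩

theorem pcd_const (x : A) : PCd 0 (fun _ => x) :=
  ⟨1, fun _ => x, fun t => by simp⟩

theorem pcd_tsmul (x : A) : PCd 1 (fun t => t • x) :=
  ⟨1, fun _ => x, fun t => by simp⟩

theorem pcd_add {d : ℕ} {F G : ℚ → A} (hF : PCd d F) (hG : PCd d G) :
    PCd d (fun t => F t + G t) := by
  obtain ⟨N₁, c₁, h₁⟩ := hF
  obtain ⟨N₂, c₂, h₂⟩ := hG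
  classical
  refine ⟨max N₁ N₂, fun j => (if j < N₁ then c₁ j else 0) + (if j < N₂ then c₂ j else 0),
    fun t => ?_⟩
  have key : ∀ j : ℕ, t ^ (j + d) • ((if j < N₁ then c₁ j else 0) + (if j < N₂ then c₂ j else 0))
      = (if j < N₁ then t ^ (j + d) • c₁ j else 0) + (if j < N₂ then t ^ (j + d) • c₂ j else 0) := by
    intro j; split_ifs <;> simp
  simp only [key, Finset.sum_add_distrib,
    sum_range_ite (le_max_left N₁ N₂), sum_range_ite (le_max_right N₁ N₂)]
  rw [← h₁ t, ← h₂ t]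

theorem pcd_smul {d : ℕ} {F : ℚ → A} (q : ℚ) (hF : PCd d F) :
    PCd d (fun t => q • F t) := by
  obtain ⟨N, c, h⟩ := hF
  refine ⟨N, fun j => q • c j, fun t => ?_⟩
  dsimp only
  rw [h t, Finset.smul_sum]
  exact Finset.sum_congr rfl (fun j _ => smul_comm q _ _)

theorem pcd_neg {d : ℕ} {F : ℚ → A} (hF : PCd d F) : PCd d (fun t => -F t) := by
  have := pcd_smul (-1) hF
  simpa using this

theorem pcd_sub {d : ℕ} {F G : ℚ → A} (hF : PCd d F) (hG : PCd d G) :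
    PCd d (fun t => F t - G t) := by
  have := pcd_add hF (pcd_neg hG)
  simpa [sub_eq_add_neg] using this

theorem pcd_weaken {d : ℕ} {F : ℚ → A} (hF : PCd (d + 1) F) : PCd d F := by
  obtain ⟨N, c, h⟩ := hF
  classical
  refine ⟨N + 1, fun j => if j = 0 then 0 else c (j - 1), fun t => ?_⟩
  rw [h t, Finset.sum_range_succ']
  simp
  exact Finset.sum_congr rfl (fun j _ => by rw [show j + (d + 1) = j + 1 + d from by omega])

theorem pcd_shift : ∀ (k : ℕ) {d' : ℕ} {F : ℚ → A}, PCd (d' + k) F → PCd d' F := by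
  intro k
  induction k with
  | zero => intro d' F h; exact h
  | succ k ih =>
      intro d' F h
      exact ih (pcd_weaken (by rwa [← Nat.add_assoc] at h))

theorem pcd_mono {d d' : ℕ} (hd : d' ≤ d) {F : ℚ → A} (hF : PCd d F) : PCd d' F := by
  obtain ⟨k, rfl⟩ := Nat.exists_eq_add_of_le hd
  exact pcd_shift k hF

theorem pcd_sum {d : ℕ} {ι : Type*} (s : Finset ι) (F : ι → ℚ → A)
    (h : ∀ i ∈ s, PCd d (F i)) : PCd d (fun t => ∑ i ∈ s, F i t) := by
  classical
  induction s using Finset.induction with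
  | empty => simpa using pcd_zero d
  | @insert i s hi ih =>
      have := pcd_add (h i (Finset.mem_insert_self i s))
        (ih (fun j hj => h j (Finset.mem_insert_of_mem hj)))
      simpa [Finset.sum_insert hi] using this

theorem pcd_mul {d e : ℕ} {F G : ℚ → A} (hF : PCd d F) (hG : PCd e G) :
    PCd (d + e) (fun t => P.mul (F t) (G t)) := by
  obtain ⟨N₁, c₁, h₁⟩ := hF
  obtain ⟨N₂, c₂, h₂⟩ := hG
  classical
  refine ⟨N₁ + N₂, fun j => ∑ p ∈ Finset.range N₁, ∑ q ∈ Finset.range N₂,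
    if j = p + q then P.mul (c₁ p) (c₂ q) else 0, fun t => ?_⟩
  dsimp only
  rw [h₁ t, h₂ t, P.mul_sum_left]
  have step : ∀ p, P.mul (t ^ (p + d) • c₁ p) (∑ q ∈ Finset.range N₂, t ^ (q + e) • c₂ q)
      = ∑ q ∈ Finset.range N₂, t ^ (p + q + (d + e)) • P.mul (c₁ p) (c₂ q) := by
    intro p
    rw [P.mul_sum_right]
    refine Finset.sum_congr rfl (fun q _ => ?_)
    rw [P.smul_mul, P.mul_smul, smul_smul, ← pow_add]
    congr 2
    ring
  simp only [step]
  symm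
  calc ∑ j ∈ Finset.range (N₁ + N₂), t ^ (j + (d + e)) •
          ∑ p ∈ Finset.range N₁, ∑ q ∈ Finset.range N₂,
            (if j = p + q then P.mul (c₁ p) (c₂ q) else 0)
      = ∑ j ∈ Finset.range (N₁ + N₂), ∑ p ∈ Finset.range N₁, ∑ q ∈ Finset.range N₂,
          (if j = p + q then t ^ (j + (d + e)) • P.mul (c₁ p) (c₂ q) else 0) := by
        refine Finset.sum_congr rfl fun j _ => ?_
        rw [Finset.smul_sum]
        refine Finset.sum_congr rfl fun p _ => ?_
        rw [Finset.smul_sum]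
        refine Finset.sum_congr rfl fun q _ => ?_
        split_ifs <;> simp
    _ = ∑ p ∈ Finset.range N₁, ∑ j ∈ Finset.range (N₁ + N₂), ∑ q ∈ Finset.range N₂,
          (if j = p + q then t ^ (j + (d + e)) • P.mul (c₁ p) (c₂ q) else 0) :=
        Finset.sum_comm
    _ = ∑ p ∈ Finset.range N₁, ∑ q ∈ Finset.range N₂, ∑ j ∈ Finset.range (N₁ + N₂),
          (if j = p + q then t ^ (j + (d + e)) • P.mul (c₁ p) (c₂ q) else 0) :=
        Finset.sum_congr rfl fun p _ => Finset.sum_comm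
    _ = ∑ p ∈ Finset.range N₁, ∑ q ∈ Finset.range N₂,
          t ^ (p + q + (d + e)) • P.mul (c₁ p) (c₂ q) := by
        refine Finset.sum_congr rfl fun p hp => Finset.sum_congr rfl fun q hq => ?_
        rw [Finset.sum_ite_eq' (Finset.range (N₁ + N₂)) (p + q)
          (fun j => t ^ (j + (d + e)) • P.mul (c₁ p) (c₂ q))]
        rw [if_pos (Finset.mem_range.mpr (by
          have := Finset.mem_range.mp hp
          have := Finset.mem_range.mp hq
          omega))]

end PreLieAlg
end Aux3
section Aux4
namespace PreLieAlg

variable {A : Type*} [AddCommGroup A] [Module ℚ A] (P : PreLieAlg ℚ A)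

theorem pcd_iterb {F : ℚ → A} (hF : PCd 1 F) (x : A) :
    ∀ k, PCd 1 (fun t => (P.mul (F t))^[k + 1] x) := by
  intro k
  induction k with
  | zero =>
      have h := P.pcd_mul hF (pcd_const x)
      exact h
  | succ k ih =>
      have e : (fun t => (P.mul (F t))^[k + 1 + 1] x)
          = fun t => P.mul (F t) ((P.mul (F t))^[k + 1] x) :=
        funext fun t => Function.iterate_succ_apply' _ _ _
      rw [e]
      exact pcd_mono (by omega) (P.pcd_mul hF ih)

theorem pcd_iterself {F : ℚ → A} (hF : PCd 1 F) :
    ∀ k, PCd 2 (fun t => (P.mul (F t))^[k + 1] (F t)) := by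
  intro k
  induction k with
  | zero => exact P.pcd_mul hF hF
  | succ k ih =>
      have e : (fun t => (P.mul (F t))^[k + 1 + 1] (F t))
          = fun t => P.mul (F t) ((P.mul (F t))^[k + 1] (F t)) :=
        funext fun t => Function.iterate_succ_apply' _ _ _
      rw [e]
      exact pcd_mono (by omega) (P.pcd_mul hF ih)

theorem pcd_Rfun {F : ℚ → A} (hF : PCd 1 F) (m : ℕ) :
    PCd 2 (fun t => P.Rfun m (F t)) := by
  unfold PreLieAlg.Rfun
  exact pcd_sum (Finset.range m) _ (fun k _ => pcd_smul _ (P.pcd_iterself hF k))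

theorem pcd_Yseq (m : ℕ) (a : A) : ∀ i, PCd 1 (fun t => P.Yseq m a i t) := by
  intro i
  induction i with
  | zero => exact pcd_mono (by omega) (pcd_zero 1)
  | succ i ih =>
      have e : (fun t => P.Yseq m a (i + 1) t)
          = fun t => t • a - P.Rfun m (P.Yseq m a i t) :=
        funext fun t => P.Yseq_succ m a i t
      rw [e]
      exact pcd_sub (pcd_tsmul a) (pcd_mono (by omega) (P.pcd_Rfun ih m))

theorem flowStar_expand {m : ℕ} (hn : P.IsNilpotentOf (m + 2)) (Ω : A → A)
    (hΩ₂ : ∀ x, Ω (P.W (m + 2) x) = x) (a b : A) (t : ℚ) :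
    P.flowStar (m + 2) Ω (t • a) b - t • P.mul a b
      = -(P.mul (P.Rfun (m + 1) (P.Yseq (m + 1) a (m + 2) t)) b)
        + ∑ k ∈ Finset.range m,
            ((Nat.factorial (k + 1 + 1) : ℚ))⁻¹ • (P.mul (P.Yseq (m + 1) a (m + 3) t))^[k + 1 + 1] b := by
  have hYΩ : Ω (t • a) = P.Yseq (m + 1) a (m + 3) t := by
    rw [← P.W_Yseq hn a t]; exact hΩ₂ _
  set y := P.Yseq (m + 1) a (m + 3) t with hy
  have e1 : P.flowStar (m + 2) Ω (t • a) b = P.expL (m + 2) (Ω (t • a)) b - b := by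
    show (t • a + P.expL (m + 2) (Ω (t • a)) b) - (t • a) - b = _
    abel
  have e3 : P.expL (m + 2) y b
      = b + (P.mul y b + ∑ k ∈ Finset.range m,
          ((Nat.factorial (k + 1 + 1) : ℚ))⁻¹ • (P.mul y)^[k + 1 + 1] b) := by
    show ∑ k ∈ Finset.range (m + 1 + 1), ((Nat.factorial k : ℚ))⁻¹ • (P.mul y)^[k] b = _
    rw [Finset.sum_range_succ' _ (m + 1), Finset.sum_range_succ' _ m]
    simp only [zero_add, Function.iterate_zero_apply, Function.iterate_one,
      Nat.factorial_zero, Nat.factorial_one, Nat.cast_one, inv_one, one_smul]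
    abel
  have hy' : y = t • a - P.Rfun (m + 1) (P.Yseq (m + 1) a (m + 2) t) :=
    P.Yseq_succ (m + 1) a (m + 2) t
  rw [e1, hYΩ, e3]
  set S := ∑ k ∈ Finset.range m,
      ((Nat.factorial (k + 1 + 1) : ℚ))⁻¹ • (P.mul y)^[k + 1 + 1] b with hS
  have e4 : P.mul y b = t • P.mul a b - P.mul (P.Rfun (m + 1) (P.Yseq (m + 1) a (m + 2) t)) b := by
    rw [hy', P.sub_mul', P.smul_mul]
  rw [e4]
  abel

theorem pcd_main {m : ℕ} (hn : P.IsNilpotentOf (m + 2)) (Ω : A → A)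
    (hΩ₂ : ∀ x, Ω (P.W (m + 2) x) = x) (a b : A) :
    PCd 2 (fun t => P.flowStar (m + 2) Ω (t • a) b - t • P.mul a b) := by
  have hfun : (fun t => P.flowStar (m + 2) Ω (t • a) b - t • P.mul a b)
      = fun t => -(P.mul (P.Rfun (m + 1) (P.Yseq (m + 1) a (m + 2) t)) b)
        + ∑ k ∈ Finset.range m,
            ((Nat.factorial (k + 1 + 1) : ℚ))⁻¹ • (P.mul (P.Yseq (m + 1) a (m + 3) t))^[k + 1 + 1] b :=
    funext (P.flowStar_expand hn Ω hΩ₂ a b)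
  rw [hfun]
  refine pcd_add (pcd_neg ?_) (pcd_sum _ _ (fun k _ => pcd_smul _ ?_))
  · exact P.pcd_mul (P.pcd_Rfun (P.pcd_Yseq (m + 1) a (m + 2)) (m + 1)) (pcd_const b)
  · have e : (fun t => (P.mul (P.Yseq (m + 1) a (m + 3) t))^[k + 1 + 1] b)
        = fun t => P.mul (P.Yseq (m + 1) a (m + 3) t)
            ((P.mul (P.Yseq (m + 1) a (m + 3) t))^[k + 1] b) :=
      funext fun t => Function.iterate_succ_apply' _ _ _
    rw [e]
    exact P.pcd_mul (P.pcd_Yseq (m + 1) a (m + 3))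
      (P.pcd_iterb (P.pcd_Yseq (m + 1) a (m + 3)) b k)

end PreLieAlg
end Aux4
theorem statement13 {A : Type*} [AddCommGroup A] [Module ℚ A]
    (P : PreLieAlg ℚ A) (n : ℕ) (hn : P.IsNilpotentOf n)
    (Ω : A → A) (hΩ₁ : ∀ a, P.W n (Ω a) = a) (hΩ₂ : ∀ a, Ω (P.W n a) = a)
    (a b : A) (φ : A →ₗ[ℚ] ℚ) :
    Tendsto (fun m : ℕ =>
        ((φ ((2 ^ m : ℚ) • P.flowStar n Ω (((1 : ℚ) / 2 ^ m) • a) b) : ℚ) : ℝ))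
      atTop (𝓝 ((φ (P.mul a b) : ℚ) : ℝ)) := by
  rcases n with _ | _ | m
  · exact absurd hn.1 (lt_irrefl 0)
  · -- n = 1 : the algebra is trivial
    have h0 : ∀ x : A, x = 0 := fun x => hn.2 x (PreLieAlg.IsProd.single x)
    have e1 : ∀ m' : ℕ,
        φ ((2 ^ m' : ℚ) • P.flowStar 1 Ω (((1 : ℚ) / 2 ^ m') • a) b) = 0 := by
      intro m'
      rw [h0 (P.flowStar 1 Ω (((1 : ℚ) / 2 ^ m') • a) b), smul_zero, map_zero]
    have e2 : φ (P.mul a b) = 0 := by rw [h0 (P.mul a b), map_zero]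
    simp only [e1, e2, Rat.cast_zero]
    exact tendsto_const_nhds
  · -- main case : n = m + 2
    obtain ⟨N, c, hc⟩ := P.pcd_main hn Ω hΩ₂ a b
    have hseq : ∀ m' : ℕ,
        φ ((2 ^ m' : ℚ) • P.flowStar (m + 2) Ω (((1 : ℚ) / 2 ^ m') • a) b)
          = φ (P.mul a b)
            + ∑ j ∈ Finset.range N, ((1 : ℚ) / 2 ^ m') ^ (j + 1) * φ (c j) := by
      intro m'
      set t : ℚ := (1 : ℚ) / 2 ^ m' with htdef
      have ht : (2 ^ m' : ℚ) * t = 1 := by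
        rw [htdef]
        field_simp
      have hflow : P.flowStar (m + 2) Ω (t • a) b
          = t • P.mul a b + ∑ j ∈ Finset.range N, t ^ (j + 2) • c j :=
        sub_eq_iff_eq_add'.mp (hc t)
      have hA : (2 ^ m' : ℚ) • P.flowStar (m + 2) Ω (t • a) b
          = P.mul a b + ∑ j ∈ Finset.range N, t ^ (j + 1) • c j := by
        rw [hflow, smul_add, smul_smul, ht, one_smul, Finset.smul_sum]
        congr 1
        refine Finset.sum_congr rfl fun j _ => ?_
        rw [smul_smul]
        congr 1
        calc (2 ^ m' : ℚ) * t ^ (j + 2) = (2 ^ m' * t) * t ^ (j + 1) := by ring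
          _ = t ^ (j + 1) := by rw [ht, one_mul]
      rw [hA, map_add, map_sum]
      congr 1
      refine Finset.sum_congr rfl fun j _ => ?_
      rw [map_smul, smul_eq_mul]
    have funeq : (fun m' : ℕ =>
          ((φ ((2 ^ m' : ℚ) • P.flowStar (m + 2) Ω (((1 : ℚ) / 2 ^ m') • a) b) : ℚ) : ℝ))
        = fun m' : ℕ => ((φ (P.mul a b) : ℚ) : ℝ)
            + ∑ j ∈ Finset.range N, ((1 : ℝ) / 2 ^ m') ^ (j + 1) * ((φ (c j) : ℚ) : ℝ) := by
      funext m'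
      rw [hseq m']
      push_cast
      ring
    have hterm : ∀ j : ℕ, Tendsto
        (fun m' : ℕ => ((1 : ℝ) / 2 ^ m') ^ (j + 1) * ((φ (c j) : ℚ) : ℝ)) atTop (𝓝 0) := by
      intro j
      have h1 : Tendsto (fun m' : ℕ => ((1 : ℝ) / 2 ^ m')) atTop (𝓝 0) := by
        have := tendsto_pow_atTop_nhds_zero_of_lt_one
          (by norm_num : (0 : ℝ) ≤ 1 / 2) (by norm_num : (1 : ℝ) / 2 < 1)
        simpa [one_div, inv_pow] using this
      have h2 : Tendsto (fun m' : ℕ => ((1 : ℝ) / 2 ^ m') ^ (j + 1)) atTop (𝓝 0) := by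
        have := h1.pow (j + 1)
        simpa [zero_pow] using this
      simpa using h2.mul_const _
    have hsum : Tendsto (fun m' : ℕ =>
        ∑ j ∈ Finset.range N, ((1 : ℝ) / 2 ^ m') ^ (j + 1) * ((φ (c j) : ℚ) : ℝ))
        atTop (𝓝 0) := by
      have := tendsto_finset_sum (Finset.range N) (fun j _ => hterm j)
      simpa using this
    rw [funeq]
    simpa using tendsto_const_nhds.add hsum
end
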